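/- arXiv:1101.3064 — 2 statements merged into one kernel-verified Lean document; each statement's English description precedes it below -/
import Mathlib

section
/- Let T be a strongly cartesian monad on a finitely complete category E, and let A be a dense generator of E. Then A embeds in a minimal T-generically closed dense generator A_T, and every T-cartesian monad S on E has arities A_T; in particular, for every f:B→SX with B in A_T, an S-generic factorisation of f is an initial object of Fact_{A_T}(S,f), so these factorisation categories are connected. -/
open CategoryTheory CategoryTheory.Limits

universe w v u

section Defs

variable {A : Type w} [Category.{v} A] {E : Type u} [Category.{v} E]

def canCocone (i : A ⥤ E) (X : E) : Cocone (CostructuredArrow.proj i X ⋙ i) where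
  pt := X
  ι :=
    { app := fun f => f.hom
      naturality := fun f g m => (CostructuredArrow.w m).trans (Category.comp_id _).symm }

def RGeneric (R : E ⥤ E) {B : E} {A₀ : E} (g : B ⟶ R.obj A₀) : Prop :=
  ∀ {A' X : E} (α : B ⟶ R.obj A') (β : A₀ ⟶ X) (γ : A' ⟶ X),
    g ≫ R.map β = α ≫ R.map γ →
      ∃! δ : A₀ ⟶ A', g ≫ R.map δ = α ∧ δ ≫ γ = β

structure FactCat (i : A ⥤ E) (Fn : E ⥤ E) (B : E) (X : E) (f : B ⟶ Fn.obj X) where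
  a : A
  g : B ⟶ Fn.obj (i.obj a)
  h : i.obj a ⟶ X
  fac : g ≫ Fn.map h = f

instance (i : A ⥤ E) (Fn : E ⥤ E) (B : E) (X : E) (f : B ⟶ Fn.obj X) :
    Category (FactCat i Fn B X f) where
  Hom o₁ o₂ := {k : o₁.a ⟶ o₂.a //
    o₁.g ≫ Fn.map (i.map k) = o₂.g ∧ i.map k ≫ o₂.h = o₁.h}
  id o := ⟨𝟙 _, by simp⟩
  comp {o₁ o₂ o₃} k l := ⟨k.1 ≫ l.1, by
    obtain ⟨k, hk1, hk2⟩ := k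
    obtain ⟨l, hl1, hl2⟩ := l
    constructor
    · simp [← hl1, ← hk1]
    · simp [hk2, hl2]⟩
  id_comp f := by apply Subtype.ext; simp
  comp_id f := by apply Subtype.ext; simp
  assoc f g h := by apply Subtype.ext; simp

/-- A cartesian monad: the endofunctor preserves pullbacks and all naturality
squares of the unit and the multiplication are pullbacks. -/
def CartesianMonad (T : Monad E) : Prop :=
  Nonempty (PreservesLimitsOfShape WalkingCospan T.toFunctor) ∧
  (∀ {X Y : E} (f : X ⟶ Y), IsPullback (T.η.app X) f (T.map f) (T.η.app Y)) ∧
  (∀ {X Y : E} (f : X ⟶ Y),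
    IsPullback (T.μ.app X) (T.map (T.map f)) (T.map f) (T.μ.app Y))

/-- A strongly cartesian monad: cartesian and the endofunctor is a local right
adjoint. -/
def StronglyCartesianMonad (T : Monad E) : Prop :=
  CartesianMonad T ∧
    ∀ X : E, (Over.post T.toFunctor (X := X)).IsRightAdjoint

/-- A cartesian monad morphism: all naturality squares are pullbacks. -/
def CartesianHom {S T : Monad E} (φ : S ⟶ T) : Prop :=
  ∀ {X Y : E} (f : X ⟶ Y),
    IsPullback (φ.toNatTrans.app X) (S.map f) (T.map f) (φ.toNatTrans.app Y)

end Defs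

section Aux
variable {E : Type u} [Category.{v} E] [HasTerminal E]

noncomputable def genTarget (T : Monad E)
    (h : (Over.post T.toFunctor (X := ⊤_ E)).IsRightAdjoint)
    {B : E} (t : B ⟶ T.obj (⊤_ E)) : E :=
  letI := h
  ((Over.post T.toFunctor (X := ⊤_ E)).leftAdjoint.obj (Over.mk t)).left

noncomputable def genUnit (T : Monad E)
    (h : (Over.post T.toFunctor (X := ⊤_ E)).IsRightAdjoint)
    {B : E} (t : B ⟶ T.obj (⊤_ E)) : B ⟶ T.obj (genTarget T h t) :=
  letI := h
  ((Adjunction.ofIsRightAdjoint (Over.post T.toFunctor (X := ⊤_ E))).unit.app (Over.mk t)).left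

lemma genUnit_w (T : Monad E)
    (h : (Over.post T.toFunctor (X := ⊤_ E)).IsRightAdjoint)
    {B : E} (t : B ⟶ T.obj (⊤_ E)) :
    genUnit T h t ≫ T.map (terminal.from (genTarget T h t)) = t := by
  letI := h
  have hw := Over.w ((Adjunction.ofIsRightAdjoint (Over.post T.toFunctor (X := ⊤_ E))).unit.app (Over.mk t))
  have h2 : ((Over.post T.toFunctor (X := ⊤_ E)).leftAdjoint.obj (Over.mk t)).hom =
      terminal.from (genTarget T h t) := terminal.hom_ext _ _
  rw [← h2]
  exact hw

lemma genUnit_lift (T : Monad E)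
    (h : (Over.post T.toFunctor (X := ⊤_ E)).IsRightAdjoint)
    {B : E} (t : B ⟶ T.obj (⊤_ E)) {Z : E} (α : B ⟶ T.obj Z)
    (hα : α ≫ T.map (terminal.from Z) = t) :
    ∃! δ : genTarget T h t ⟶ Z, genUnit T h t ≫ T.map δ = α := by
  letI := h
  set adj := Adjunction.ofIsRightAdjoint (Over.post T.toFunctor (X := ⊤_ E)) with hadj
  set Lt := (Over.post T.toFunctor (X := ⊤_ E)).leftAdjoint.obj (Over.mk t) with hLt
  set Z' : Over (⊤_ E) := Over.mk (terminal.from Z) with hZ'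
  have key : ∀ δ : Lt ⟶ Z',
      genUnit T h t ≫ T.map δ.left = ((adj.homEquiv (Over.mk t) Z') δ).left := by
    intro δ; rw [Adjunction.homEquiv_unit, Over.comp_left]; rfl
  refine ⟨((adj.homEquiv (Over.mk t) Z').symm (Over.homMk α hα)).left, ?_, ?_⟩
  · show genUnit T h t ≫ T.map _ = α
    rw [key ((adj.homEquiv (Over.mk t) Z').symm (Over.homMk α hα)),
      Equiv.apply_symm_apply]
    rfl
  · intro δ hδ
    have h1 : (adj.homEquiv (Over.mk t) Z') (Over.homMk (U := Lt) δ (terminal.hom_ext _ _)) =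
        Over.homMk α hα := by
      ext
      rw [← key]
      exact hδ
    have h2 := congrArg (fun x => ((adj.homEquiv (Over.mk t) Z').symm x).left) h1
    rw [Equiv.symm_apply_apply] at h2
    exact h2
end Aux

section Aux2
variable {E : Type u} [Category.{v} E] [HasTerminal E] [HasPullbacks E]

lemma genUnit_generic (T : Monad E)
    (hpres : PreservesLimitsOfShape WalkingCospan T.toFunctor)
    (h : (Over.post T.toFunctor (X := ⊤_ E)).IsRightAdjoint)
    {B : E} (t : B ⟶ T.obj (⊤_ E)) :
    RGeneric T.toFunctor (genUnit T h t) := by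
  intro A' X' α β γ hcomm
  have hg0 : genUnit T h t ≫ T.map (terminal.from (genTarget T h t)) = t := genUnit_w T h t
  have hα : α ≫ T.map (terminal.from A') = t := by
    rw [show terminal.from A' = γ ≫ terminal.from X' from terminal.hom_ext _ _,
      Functor.map_comp, ← Category.assoc, ← hcomm, Category.assoc, ← Functor.map_comp,
      show β ≫ terminal.from X' = terminal.from (genTarget T h t) from terminal.hom_ext _ _, hg0]
  have hP : IsPullback (pullback.fst β γ) (pullback.snd β γ) β γ := IsPullback.of_hasPullback β γ
  have hTP := hP.map T.toFunctor
  set m := hTP.lift (genUnit T h t) α hcomm with hmdef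
  have hm1 : m ≫ T.map (pullback.fst β γ) = genUnit T h t := hTP.lift_fst (genUnit T h t) α hcomm
  have hm2 : m ≫ T.map (pullback.snd β γ) = α := hTP.lift_snd (genUnit T h t) α hcomm
  have hmt : m ≫ T.map (terminal.from (pullback β γ)) = t := by
    rw [show terminal.from (pullback β γ) = pullback.fst β γ ≫ terminal.from (genTarget T h t) from
      terminal.hom_ext _ _, Functor.map_comp, ← Category.assoc, hm1, hg0]
  obtain ⟨e, he, heu⟩ := genUnit_lift T h t m hmt
  have hefst : e ≫ pullback.fst β γ = 𝟙 (genTarget T h t) := by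
    obtain ⟨e', he', heu'⟩ := genUnit_lift T h t (genUnit T h t) hg0
    have h1 : e ≫ pullback.fst β γ = e' := heu' _ (by
      show genUnit T h t ≫ T.map _ = _
      rw [Functor.map_comp, ← Category.assoc, he, hm1])
    have h2 : 𝟙 (genTarget T h t) = e' := heu' _ (by
      show genUnit T h t ≫ T.map _ = _
      simp)
    rw [h1, h2]
  refine ⟨e ≫ pullback.snd β γ, ⟨?_, ?_⟩, ?_⟩
  · rw [Functor.map_comp, ← Category.assoc, he, hm2]
  · rw [Category.assoc, ← pullback.condition, ← Category.assoc, hefst, Category.id_comp]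
  · rintro δ' ⟨hδ'1, hδ'2⟩
    have hcomm' : 𝟙 (genTarget T h t) ≫ β = δ' ≫ γ := by rw [Category.id_comp, hδ'2]
    have he'' : genUnit T h t ≫ T.map (pullback.lift (𝟙 (genTarget T h t)) δ' hcomm') = m := by
      apply hTP.hom_ext
      · rw [Category.assoc, ← Functor.map_comp, pullback.lift_fst, hm1]
        simp
      · rw [Category.assoc, ← Functor.map_comp, pullback.lift_snd, hδ'1, hm2]
    have heq : pullback.lift (𝟙 (genTarget T h t)) δ' hcomm' = e := heu _ he''
    rw [← heq, pullback.lift_snd]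

lemma generic_iso (T : Monad E)
    (hpres : PreservesLimitsOfShape WalkingCospan T.toFunctor)
    (h : (Over.post T.toFunctor (X := ⊤_ E)).IsRightAdjoint)
    {B Y : E} (g : B ⟶ T.obj Y) (hg : RGeneric T.toFunctor g) :
    Nonempty (genTarget T h (g ≫ T.map (terminal.from Y)) ≅ Y) := by
  set t := g ≫ T.map (terminal.from Y) with ht
  have hg0 : genUnit T h t ≫ T.map (terminal.from (genTarget T h t)) = t := genUnit_w T h t
  have hgen0 : RGeneric T.toFunctor (genUnit T h t) := genUnit_generic T hpres h t
  obtain ⟨δ, ⟨hδ1, _⟩, _⟩ := hgen0 g (terminal.from _) (terminal.from Y)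
    (by rw [hg0, ht])
  obtain ⟨δ', ⟨hδ'1, _⟩, _⟩ := hg (genUnit T h t) (terminal.from Y) (terminal.from _)
    (by rw [hg0, ht])
  have hid1 : δ ≫ δ' = 𝟙 _ := by
    obtain ⟨ε, hε, hεu⟩ := hgen0 (genUnit T h t) (terminal.from _) (terminal.from _) rfl
    have e1 : δ ≫ δ' = ε := hεu _ ⟨by rw [Functor.map_comp, ← Category.assoc, hδ1, hδ'1],
      terminal.hom_ext _ _⟩
    have e2 : 𝟙 _ = ε := hεu _ ⟨by simp, terminal.hom_ext _ _⟩
    rw [e1, e2]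
  have hid2 : δ' ≫ δ = 𝟙 _ := by
    obtain ⟨ε, hε, hεu⟩ := hg g (terminal.from _) (terminal.from _) rfl
    have e1 : δ' ≫ δ = ε := hεu _ ⟨by rw [Functor.map_comp, ← Category.assoc, hδ'1, hδ1],
      terminal.hom_ext _ _⟩
    have e2 : 𝟙 _ = ε := hεu _ ⟨by simp, terminal.hom_ext _ _⟩
    rw [e1, e2]
  exact ⟨⟨δ, δ', hid1, hid2⟩⟩

lemma sgeneric_fact (T : Monad E)
    (hpres : PreservesLimitsOfShape WalkingCospan T.toFunctor)
    (h : (Over.post T.toFunctor (X := ⊤_ E)).IsRightAdjoint)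
    (S : Monad E) (φ : S ⟶ T) (hφ : CartesianHom φ)
    {B X : E} (f : B ⟶ S.obj X) :
    ∃ (gg : B ⟶ S.obj (genTarget T h
        ((f ≫ φ.toNatTrans.app X) ≫ T.map (terminal.from X))))
      (hh : genTarget T h ((f ≫ φ.toNatTrans.app X) ≫ T.map (terminal.from X)) ⟶ X),
      gg ≫ S.map hh = f ∧ RGeneric S.toFunctor gg := by
  set t := (f ≫ φ.toNatTrans.app X) ≫ T.map (terminal.from X) with ht
  obtain ⟨hh, hhh, _⟩ := genUnit_lift T h t (f ≫ φ.toNatTrans.app X) rfl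
  have sq := hφ hh
  have hcomm : genUnit T h t ≫ T.map hh = f ≫ φ.toNatTrans.app X := hhh
  have hc2 : genUnit T h t ≫ T.map hh = f ≫ φ.toNatTrans.app X := hcomm
  refine ⟨sq.lift (genUnit T h t) f hc2, hh, sq.lift_snd _ _ _, ?_⟩
  have hfst : sq.lift (genUnit T h t) f hc2 ≫ φ.toNatTrans.app _ = genUnit T h t :=
    sq.lift_fst _ _ _
  set gg := sq.lift (genUnit T h t) f hc2 with hgg
  intro A' X' α β γ hc
  have hcT : genUnit T h t ≫ T.map β = (α ≫ φ.toNatTrans.app A') ≫ T.map γ := by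
    rw [← hfst, Category.assoc, ← φ.toNatTrans.naturality β, ← Category.assoc, hc,
      Category.assoc, φ.toNatTrans.naturality γ, Category.assoc]
  obtain ⟨δ, ⟨hδ1, hδ2⟩, hδu⟩ := genUnit_generic T hpres h t (α ≫ φ.toNatTrans.app A') β γ hcT
  refine ⟨δ, ⟨?_, hδ2⟩, ?_⟩
  · apply (hφ γ).hom_ext
    · rw [Category.assoc, φ.toNatTrans.naturality δ, ← Category.assoc, hfst, hδ1]
    · rw [Category.assoc, ← Functor.map_comp, hδ2, hc]
  · rintro δ'' ⟨h1, h2⟩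
    refine hδu _ ⟨?_, h2⟩
    rw [← h1, Category.assoc, φ.toNatTrans.naturality δ'', ← Category.assoc, hfst]

end Aux2



section Aux3
variable {A : Type w} [Category.{v} A] {E : Type u} [Category.{v} E]

/-- The closure of the image of `i` under canonical generic factorisations. -/
inductive GenClosure [HasTerminal E] (i : A ⥤ E) (T : Monad E)
    (h : (Over.post T.toFunctor (X := ⊤_ E)).IsRightAdjoint) : E → Prop
  | base (a : A) : GenClosure i T h (i.obj a)
  | step {B : E} (hB : GenClosure i T h B) (t : B ⟶ T.obj (⊤_ E)) :
      GenClosure i T h (genTarget T h t)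

variable [HasTerminal E]

/-- Stages of the generic closure, as a small family. -/
noncomputable def genStages (i : A ⥤ E) (T : Monad E)
    (h : (Over.post T.toFunctor (X := ⊤_ E)).IsRightAdjoint) :
    ℕ → ((σ : Type (max w v)) × (σ → E))
  | 0 => ⟨ULift.{v} A, fun a => i.obj a.down⟩
  | (n + 1) =>
    ⟨Σ x : (genStages i T h n).1, ULift.{w} ((genStages i T h n).2 x ⟶ T.obj (⊤_ E)),
      fun q => genTarget T h q.2.down⟩

lemma genStages_mem (i : A ⥤ E) (T : Monad E)
    (h : (Over.post T.toFunctor (X := ⊤_ E)).IsRightAdjoint) :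
    ∀ n x, GenClosure i T h ((genStages i T h n).2 x) := by
  intro n
  induction n with
  | zero => exact fun x => GenClosure.base x.down
  | succ n ih => exact fun x => GenClosure.step (ih x.1) x.2.down

lemma genStages_surj (i : A ⥤ E) (T : Monad E)
    (h : (Over.post T.toFunctor (X := ⊤_ E)).IsRightAdjoint) {X : E}
    (hX : GenClosure i T h X) :
    ∃ p : (n : ℕ) × (genStages i T h n).1, (genStages i T h p.1).2 p.2 = X := by
  induction hX with
  | base a => exact ⟨⟨0, ULift.up a⟩, rfl⟩
  | step hB t ih =>
    obtain ⟨⟨n, x⟩, hx⟩ := ih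
    subst hx
    exact ⟨⟨n + 1, ⟨x, ULift.up t⟩⟩, rfl⟩

lemma genClosure_small (i : A ⥤ E) (T : Monad E)
    (h : (Over.post T.toFunctor (X := ⊤_ E)).IsRightAdjoint) :
    Small.{max w v} (Subtype (GenClosure i T h)) := by
  refine small_of_surjective (α := (n : ℕ) × (genStages i T h n).1)
    (f := fun p => ⟨(genStages i T h p.1).2 p.2, genStages_mem i T h p.1 p.2⟩) ?_
  rintro ⟨X, hX⟩
  obtain ⟨p, hp⟩ := genStages_surj i T h hX
  exact ⟨p, Subtype.ext hp⟩

/-- Objects of the costructured-arrow category over an enlarged subcategory. -/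
def mkObj (i : A ⥤ E) (P : E → Prop) (hP : ∀ a : A, P (i.obj a)) (X : E) {a : A}
    (f : i.obj a ⟶ X) : CostructuredArrow (ObjectProperty.ι P) X :=
  CostructuredArrow.mk (S := ObjectProperty.ι P)
    (Y := ObjectProperty.FullSubcategory.mk (i.obj a) (hP a)) f

/-- Restricting a cocone over the enlarged subcategory to the original dense generator. -/
noncomputable def restrictCocone (i : A ⥤ E) (P : E → Prop) (hP : ∀ a : A, P (i.obj a)) (X : E)
    (c : Cocone (CostructuredArrow.proj (ObjectProperty.ι P) X ⋙
      ObjectProperty.ι P)) :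
    Cocone (CostructuredArrow.proj i X ⋙ i) where
  pt := c.pt
  ι :=
    { app := fun f => c.ι.app (mkObj i P hP X f.hom)
      naturality := fun f g m => by
        have := c.ι.naturality (X := mkObj i P hP X f.hom) (Y := mkObj i P hP X g.hom)
          (CostructuredArrow.homMk (ObjectProperty.homMk (i.map m.left)) (by simpa [mkObj] using CostructuredArrow.w m))
        exact this }

lemma dense_extend (i : A ⥤ E) (hdense : ∀ X : E, Nonempty (IsColimit (canCocone i X)))
    (P : E → Prop) (hP : ∀ a : A, P (i.obj a)) (X : E) :
    Nonempty (IsColimit (canCocone (ObjectProperty.ι P) X)) := by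
  constructor
  refine
    { desc := fun c => (hdense X).some.desc (restrictCocone i P hP X c)
      fac := ?_
      uniq := ?_ }
  · intro c b
    show b.hom ≫ _ = _
    apply (hdense b.left.obj).some.hom_ext
    intro f'
    show f'.hom ≫ b.hom ≫ _ = f'.hom ≫ c.ι.app b
    have h1 : f'.hom ≫ c.ι.app b = c.ι.app (mkObj i P hP X (f'.hom ≫ b.hom)) := by
      have := c.ι.naturality (X := mkObj i P hP X (f'.hom ≫ b.hom)) (Y := b)
        (CostructuredArrow.homMk (f := mkObj i P hP X (f'.hom ≫ b.hom)) (f' := b)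
          (ObjectProperty.homMk f'.hom : (mkObj i P hP X (f'.hom ≫ b.hom)).left ⟶ b.left) (by rfl))
      exact this.trans (Category.comp_id _)
    have h2 : (f'.hom ≫ b.hom) ≫ (hdense X).some.desc (restrictCocone i P hP X c) =
        c.ι.app (mkObj i P hP X (f'.hom ≫ b.hom)) := by
      have := (hdense X).some.fac (restrictCocone i P hP X c)
        (CostructuredArrow.mk (Y := f'.left) (f'.hom ≫ b.hom))
      exact this
    rw [h1, ← h2]
    exact (Category.assoc _ _ _).symm
  · intro c m hm
    apply (hdense X).some.uniq (restrictCocone i P hP X c)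
    intro f'
    have := hm (mkObj i P hP X f'.hom)
    exact this

end Aux3

/-- for a strongly cartesian monad `T` on a finitely complete
category `E` with dense generator `A`, the generator `A` embeds in a minimal
`T`-generically closed dense generator `A_T`, and every `T`-cartesian monad `S`
has arities `A_T`: every `f : B ⟶ S X` with `B ∈ A_T` has an `S`-generic
factorisation giving an initial object of `Fact_{A_T}(S,f)`, and these
factorisation categories are connected. -/
theorem stronglyCartesian_canonical_arities
    {A : Type v} [SmallCategory A] {E : Type u} [Category.{v} E]
    [HasFiniteLimits E]
    (i : A ⥤ E) (hfull : i.Full) (hfaithful : i.Faithful)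
    (hdense : ∀ X : E, Nonempty (IsColimit (canCocone i X)))
    (T : Monad E) (hT : StronglyCartesianMonad T) :
    ∃ P : E → Prop,
      -- `A_T` is small and contains `A`:
      Small.{v} (Subtype P) ∧
      (∀ a : A, P (i.obj a)) ∧
      -- `A_T` is a dense generator of `E`:
      (∀ X : E, Nonempty (IsColimit (canCocone (ObjectProperty.ι P) X))) ∧
      -- `A_T` is `T`-generically closed:
      (∀ (B Y : E), P B → ∀ g : B ⟶ T.obj Y, RGeneric T.toFunctor g →
        ∃ Y', P Y' ∧ Nonempty (Y' ≅ Y)) ∧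
      -- and minimal as such:
      (∀ Q : E → Prop,
        (∀ a : A, Q (i.obj a)) →
        (∀ X Y : E, Q X → Nonempty (X ≅ Y) → Q Y) →
        (∀ (B Y : E), Q B → ∀ g : B ⟶ T.obj Y, RGeneric T.toFunctor g →
          ∃ Y', Q Y' ∧ Nonempty (Y' ≅ Y)) →
        ∀ X, P X → Q X) ∧
      -- every `T`-cartesian monad `S` has arities `A_T`:
      (∀ (S : Monad E) (φ : S ⟶ T), CartesianHom φ →
        ∀ (b : ObjectProperty.FullSubcategory P) (X : E) (f : b.obj ⟶ S.obj X),
          HasInitial (FactCat (ObjectProperty.ι P) S.toFunctor b.obj X f) ∧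
          IsConnected (FactCat (ObjectProperty.ι P) S.toFunctor b.obj X f)) := by
  obtain ⟨hcart, hadj⟩ := hT
  obtain ⟨⟨hpres⟩, -, -⟩ := hcart
  have h := hadj (⊤_ E)
  refine ⟨GenClosure i T h, genClosure_small i T h, fun a => GenClosure.base a,
    dense_extend i hdense _ (fun a => GenClosure.base a), ?_, ?_, ?_⟩
  · intro B Y hB g hg
    exact ⟨genTarget T h (g ≫ T.map (terminal.from Y)), GenClosure.step hB _,
      generic_iso T hpres h g hg⟩
  · intro Q hQbase hQiso hQgen X hX
    induction hX with
    | base a => exact hQbase a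
    | step hB t ih =>
      obtain ⟨Y', hY', hiso⟩ := hQgen _ _ ih (genUnit T h t) (genUnit_generic T hpres h t)
      exact hQiso Y' _ hY' hiso
  · intro S φ hφ b X f
    obtain ⟨gg, hh, hfac, hgen⟩ := sgeneric_fact T hpres h S φ hφ f
    let o₀ : FactCat (ObjectProperty.ι (GenClosure i T h)) S.toFunctor b.obj X f :=
      ⟨⟨genTarget T h ((f ≫ φ.toNatTrans.app X) ≫ T.map (terminal.from X)),
        GenClosure.step b.property _⟩, gg, hh, hfac⟩
    have key : ∀ o : FactCat (ObjectProperty.ι (GenClosure i T h)) S.toFunctor b.obj X f,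
        ∃! k : genTarget T h ((f ≫ φ.toNatTrans.app X) ≫ T.map (terminal.from X)) ⟶ o.a.obj,
          gg ≫ S.map k = o.g ∧ k ≫ o.h = hh :=
      fun o => hgen o.g hh o.h (by rw [hfac, o.fac])
    have hinit : IsInitial o₀ := IsInitial.ofUniqueHom
      (fun o => ⟨ObjectProperty.homMk (key o).choose, (key o).choose_spec.1.1, (key o).choose_spec.1.2⟩)
      (fun o m => Subtype.ext (by ext; exact (key o).choose_spec.2 m.1.hom ⟨m.2.1, m.2.2⟩))
    have hne : Nonempty (FactCat (ObjectProperty.ι (GenClosure i T h))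
        S.toFunctor b.obj X f) := ⟨o₀⟩
    refine ⟨hinit.hasInitial, zigzag_isConnected fun o₁ o₂ => ?_⟩
    exact Relation.ReflTransGen.trans
      (Relation.ReflTransGen.single (Or.inr ⟨hinit.to o₁⟩))
      (Relation.ReflTransGen.single (Or.inl ⟨hinit.to o₂⟩))
end

section
/- A bijective-on-objects functor j:A→Θ, where A is a skeleton of the category of finite sets and E = Set, is a theory with arities A (i.e. the monad j^* j_! on PSh(A) preserves flat presheaves) if and only if j preserves finite coproducts, i.e. if and only if Θ^op is a Lawvere algebraic theory; under this identification, Θ-models (presheaves on Θ restricting to flat presheaves on A) coincide with models of the Lawvere theory. -/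
open CategoryTheory CategoryTheory.Limits

universe v₁ u₁ u₂

/-- The functor `ℰ ⥤ Cᵒᵖ ⥤ Type v₁` of the older Mathlib (removed since), restored with its
old definition. -/
def CategoryTheory.Presheaf.restrictedYoneda {C : Type u₁} [Category.{v₁} C] {ℰ : Type u₂}
    [Category.{v₁} ℰ] (A : C ⥤ ℰ) : ℰ ⥤ Cᵒᵖ ⥤ Type v₁ :=
  yoneda ⋙ (Functor.whiskeringLeft _ _ (Type v₁)).obj (Functor.op A)

/-- The inclusion of the skeleton of finite sets into `Set`. -/
def finInclusion : FintypeCat.Skeleton.{0} ⥤ Type :=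
  FintypeCat.Skeleton.incl ⋙ FintypeCat.incl

namespace LawvereAux

abbrev A := FintypeCat.Skeleton.{0}
noncomputable abbrev nu : Type ⥤ (Aᵒᵖ ⥤ Type) := Presheaf.restrictedYoneda finInclusion
abbrev one : A := FintypeCat.Skeleton.mk 1
abbrev pt1 : ULift (Fin 1) := ⟨0⟩
instance : Subsingleton (ULift (Fin 1)) := ⟨fun a b => by
  cases a; cases b; congr; exact Subsingleton.elim _ _⟩
abbrev ev {b : A} {Z : Type} (f : ULift (Fin b.len) ⟶ Z) (x : ULift (Fin b.len)) : Z := f x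
lemma homext {b : A} {Z : Type} {f g : ULift (Fin b.len) ⟶ Z} (h : ∀ x, ev f x = ev g x) :
    f = g := ConcreteCategory.hom_ext _ _ h
def pick {b : A} (x : ULift (Fin b.len)) : one ⟶ b := fun _ => x
lemma pick_comp {b c : A} (f : b ⟶ c) (x : ULift (Fin b.len)) :
    pick x ≫ f = pick (f x) := rfl
noncomputable def eta (P : Aᵒᵖ ⥤ Type) : P ⟶ nu.obj (P.obj (Opposite.op one)) where
  app b := TypeCat.ofHom (fun p => TypeCat.ofHom (fun x => P.map (pick x).op p))
  naturality b b' f := by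
    apply ConcreteCategory.hom_ext; intro p; apply homext; intro x
    show P.map (pick x).op (P.map f p) = P.map ((pick ((finInclusion.map f.unop) x)).op) p
    rw [← FunctorToTypes.map_comp_apply]; rfl
def Good (P : Aᵒᵖ ⥤ Type) : Prop :=
  ∀ b : A, Function.Bijective ((eta P).app (Opposite.op b))
lemma eta_natural {P Q : Aᵒᵖ ⥤ Type} (α : P ⟶ Q) :
    eta P ≫ nu.map (α.app (Opposite.op one)) = α ≫ eta Q := by
  ext b p; apply homext; intro x
  show α.app (Opposite.op one) (P.map (pick x).op p) = Q.map (pick x).op (α.app b p)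
  exact ConcreteCategory.congr_hom (α.naturality (pick x).op) p

lemma good_of_iso {P Q : Aᵒᵖ ⥤ Type} (e : P ≅ Q) (h : Good P) : Good Q := by
  intro b
  have h1 : (eta P).app (Opposite.op b) ≫ (nu.map (e.hom.app (Opposite.op one))).app (Opposite.op b)
      = e.hom.app (Opposite.op b) ≫ (eta Q).app (Opposite.op b) :=
    congr_fun (congr_arg NatTrans.app (eta_natural e.hom)) (Opposite.op b)
  have h2 : ⇑((eta Q).app (Opposite.op b)) = fun q =>
      (nu.map (e.hom.app (Opposite.op one))).app (Opposite.op b)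
        ((eta P).app (Opposite.op b) (e.inv.app (Opposite.op b) q)) := by
    funext q
    have := ConcreteCategory.congr_hom h1 (e.inv.app (Opposite.op b) q)
    simp only [types_comp_apply] at this
    have h3 : e.hom.app (Opposite.op b) (e.inv.app (Opposite.op b) q) = q := by
      exact ConcreteCategory.congr_hom (NatTrans.congr_app e.inv_hom_id (Opposite.op b)) q
    rw [this, h3]
  rw [h2]
  have bij1 : Function.Bijective (e.inv.app (Opposite.op b)) :=
    (isIso_iff_bijective _).1 inferInstance
  have bij2 : Function.Bijective ((nu.map (e.hom.app (Opposite.op one))).app (Opposite.op b)) := by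
    have : IsIso (nu.map (e.hom.app (Opposite.op one))) := inferInstance
    exact (isIso_iff_bijective _).1 inferInstance
  exact bij2.comp ((h b).comp bij1)

lemma good_nu (X : Type) : Good (nu.obj X) := by
  intro b
  constructor
  · intro p p' h
    apply homext; intro u
    exact congrArg (fun t => ev (ev t u) pt1) h
  · intro q
    refine ⟨TypeCat.ofHom (fun u => ev (ev q u) pt1), ?_⟩
    apply homext; intro u; apply homext; intro v
    show ev (ev q u) pt1 = ev (ev q u) v
    rw [show v = pt1 from Subsingleton.elim (α := ULift (Fin 1)) v pt1]

end LawvereAux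

namespace LawvereAux
open Opposite

lemma good_iff_essImage (P : Aᵒᵖ ⥤ Type) :
    nu.essImage P ↔ Good P := by
  constructor
  · rintro ⟨X, ⟨e⟩⟩
    exact good_of_iso e (good_nu X)
  · intro h
    have : ∀ b : Aᵒᵖ, IsIso ((eta P).app b) := by
      rintro ⟨b⟩
      rw [isIso_iff_bijective]
      exact h b
    have : IsIso (eta P) := NatIso.isIso_of_isIso_app _
    exact ⟨P.obj (op one), ⟨(asIso (eta P)).symm⟩⟩

lemma good_yoneda (a : A) : Good (yoneda.obj a) := by
  intro b
  constructor
  · intro f f' h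
    funext u
    exact congr_fun (ConcreteCategory.congr_hom h u) pt1
  · intro q
    refine ⟨fun u => ev q u pt1, ?_⟩
    apply homext; intro u; funext v
    show ev q u pt1 = ev q u v
    rw [show v = pt1 from Subsingleton.elim (α := ULift (Fin 1)) v pt1]

end LawvereAux

namespace LawvereAux
open Opposite

variable {J : Type} (D : Discrete J ⥤ A) (c : Cocone D)

/-- the canonical comparison for a discrete cocone in `A` -/
def sigmaMap : (Σ i : J, ULift (Fin ((D.obj ⟨i⟩).len))) → ULift (Fin c.pt.len) :=
  fun p => c.ι.app ⟨p.1⟩ p.2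

/-- A discrete cocone in `A` whose comparison map is bijective is a colimit. -/
noncomputable def isColimitOfSigmaBijective (h : Function.Bijective (sigmaMap D c)) :
    IsColimit c := by
  let e := Equiv.ofBijective _ h
  refine ⟨fun s => fun z => s.ι.app ⟨(e.symm z).1⟩ (e.symm z).2, fun s => ?_, fun s m hm => ?_⟩
  · rintro ⟨i⟩
    funext y
    show s.ι.app ⟨(e.symm (sigmaMap D c ⟨i, y⟩)).1⟩ (e.symm (sigmaMap D c ⟨i, y⟩)).2 = s.ι.app ⟨i⟩ y
    rw [show sigmaMap D c ⟨i, y⟩ = e ⟨i, y⟩ from rfl, Equiv.symm_apply_apply]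
  · funext z
    obtain ⟨⟨i, y⟩, rfl⟩ := h.2 z
    show m (sigmaMap D c ⟨i, y⟩) =
      s.ι.app ⟨(e.symm (sigmaMap D c ⟨i, y⟩)).1⟩ (e.symm (sigmaMap D c ⟨i, y⟩)).2
    have h2 : e.symm (sigmaMap D c ⟨i, y⟩) = ⟨i, y⟩ := e.symm_apply_apply ⟨i, y⟩
    rw [h2]
    exact congr_fun (hm ⟨i⟩) y

/-- Conversely, the comparison map of a colimit cocone is bijective. -/
lemma sigmaBijective_of_isColimit [Fintype J] (hc : IsColimit c) :
    Function.Bijective (sigmaMap D c) := by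
  classical
  constructor
  · -- injectivity via a map to a large finite set
    let n := Fintype.card (Σ i : J, ULift (Fin ((D.obj ⟨i⟩).len)))
    let enc := Fintype.equivFin (Σ i : J, ULift (Fin ((D.obj ⟨i⟩).len)))
    let s : Cocone D := ⟨FintypeCat.Skeleton.mk n,
      Discrete.natTrans (fun i => fun y => (⟨enc ⟨i.as, y⟩⟩ : ULift (Fin n)))⟩
    intro p p' hpp
    have h1 : ∀ (q : Σ i : J, ULift (Fin ((D.obj ⟨i⟩).len))),
        hc.desc s (sigmaMap D c q) = (⟨enc q⟩ : ULift (Fin n)) := by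
      rintro ⟨i, y⟩
      exact congr_fun (hc.fac s ⟨i⟩) y
    have := (h1 p).symm.trans ((congr_arg (hc.desc s) hpp).trans (h1 p'))
    exact enc.injective (congr_arg ULift.down this)
  · -- surjectivity via the two-map trick
    intro z
    by_contra hz
    let z0 : ULift (Fin 2) := ⟨0⟩
    let z1 : ULift (Fin 2) := ⟨1⟩
    let s : Cocone D := ⟨FintypeCat.Skeleton.mk 2,
      Discrete.natTrans (fun _ => fun _ => z0)⟩
    let g1 : c.pt ⟶ FintypeCat.Skeleton.mk 2 := fun _ => z0
    let g2 : c.pt ⟶ FintypeCat.Skeleton.mk 2 :=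
      fun w => if ∃ q, sigmaMap D c q = w then z0 else z1
    have e1 : g1 = hc.desc s := hc.uniq s g1 (by rintro ⟨i⟩; rfl)
    have e2 : g2 = hc.desc s := hc.uniq s g2 (by
      rintro ⟨i⟩
      funext y
      show (if ∃ q, sigmaMap D c q = c.ι.app ⟨i⟩ y then z0 else z1) = z0
      rw [if_pos ⟨⟨i, y⟩, rfl⟩])
    have h3 : g1 z = g2 z := by rw [e1, e2]
    have h4 : z0 = (if ∃ q, sigmaMap D c q = z then z0 else z1) := h3
    rw [if_neg hz] at h4
    exact absurd (congr_arg ULift.down h4) (by simp [z0, z1])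

end LawvereAux

namespace LawvereAux
open Opposite

/-- every object of `A` is the coproduct of its points -/
def cofanPick (b : A) : Cocone (Discrete.functor (fun _ : ULift (Fin b.len) => one)) :=
  ⟨b, Discrete.natTrans (fun x => pick x.as)⟩

noncomputable def cofanPickIsColimit (b : A) : IsColimit (cofanPick b) := by
  apply isColimitOfSigmaBijective
  constructor
  · rintro ⟨x, u⟩ ⟨x', u'⟩ h
    have : x = x' := h
    subst this
    congr 1
    exact Subsingleton.elim (α := ULift (Fin 1)) _ _
  · intro z
    exact ⟨⟨z, pt1⟩, rfl⟩

/-- an explicit coproduct cofan in `A` for any finite family -/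
noncomputable def cofanA {J : Type} [Fintype J] (a : J → A) :
    Cocone (Discrete.functor a) := by
  classical
  exact ⟨FintypeCat.Skeleton.mk (Fintype.card (Σ i : J, ULift (Fin ((a i).len)))),
    Discrete.natTrans (fun i => fun y =>
      (⟨Fintype.equivFin _ ⟨i.as, y⟩⟩ : ULift (Fin (Fintype.card (Σ i : J, ULift (Fin ((a i).len)))))))⟩

noncomputable def cofanAIsColimit {J : Type} [Fintype J] (a : J → A) :
    IsColimit (cofanA a) := by
  classical
  apply isColimitOfSigmaBijective
  have : ∀ p : (Σ i : J, ULift (Fin ((a i).len))),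
      sigmaMap _ (cofanA a) p = ⟨Fintype.equivFin _ p⟩ := by rintro ⟨i, y⟩; rfl
  constructor
  · intro p p' h
    rw [this p, this p'] at h
    exact (Fintype.equivFin _).injective (congr_arg ULift.down h)
  · intro z
    refine ⟨(Fintype.equivFin _).symm z.down, ?_⟩
    rw [this]
    convert congrArg ULift.up ((Fintype.equivFin (Σ i : J, ULift (Fin ((a i).len)))).apply_symm_apply z.down)
    exact Iff.rfl

end LawvereAux

namespace LawvereAux
open Opposite

variable {Θ : Type} [SmallCategory Θ] (j : A ⥤ Θ)

/-- the comparison map expressing `j b` as a coproduct of points -/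
def Phi (b : A) (θ : Θ) : (j.obj b ⟶ θ) → (ULift (Fin b.len) → (j.obj one ⟶ θ)) :=
  fun g x => j.map (pick x) ≫ g

lemma Phi_comp {b b' : A} (f : b ⟶ b') (θ : Θ) (g : j.obj b' ⟶ θ) (x : ULift (Fin b.len)) :
    Phi j b θ (j.map f ≫ g) x = Phi j b' θ g (f x) := by
  simp only [Phi, ← Category.assoc, ← j.map_comp, pick_comp]

lemma phi_bijective_of_preserves [PreservesFiniteCoproducts j] (b : A) (θ : Θ) :
    Function.Bijective (Phi j b θ) := by
  have : PreservesColimitsOfShape (Discrete (ULift (Fin b.len))) j := inferInstance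
  have ht : IsColimit (j.mapCocone (cofanPick b)) := isColimitOfPreserves j (cofanPickIsColimit b)
  constructor
  · intro g g' h
    refine ht.hom_ext ?_
    rintro ⟨x⟩
    exact congr_fun h x
  · intro q
    let s : Cocone (Discrete.functor (fun _ : ULift (Fin b.len) => one) ⋙ j) :=
      ⟨θ, Discrete.natTrans (fun x => q x.as)⟩
    exact ⟨ht.desc s, funext fun x => ht.fac s ⟨x⟩⟩

section CP
variable (hPhi : ∀ b θ, Function.Bijective (Phi j b θ))
variable {J : Type} [Fintype J] {D : Discrete J ⥤ A} {c : Cocone D} (hc : IsColimit c)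

noncomputable def descAux (s : Cocone (D ⋙ j)) : j.obj c.pt ⟶ s.pt :=
  (Equiv.ofBijective _ (hPhi c.pt s.pt)).symm
    (fun z => Phi j (D.obj ⟨((Equiv.ofBijective _ (sigmaBijective_of_isColimit D c hc)).symm z).1⟩)
      s.pt (s.ι.app ⟨((Equiv.ofBijective _ (sigmaBijective_of_isColimit D c hc)).symm z).1⟩)
      ((Equiv.ofBijective _ (sigmaBijective_of_isColimit D c hc)).symm z).2)

lemma descAux_spec (s : Cocone (D ⋙ j)) (i : J) (x : ULift (Fin ((D.obj ⟨i⟩).len))) :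
    Phi j c.pt s.pt (descAux j hPhi hc s) (c.ι.app ⟨i⟩ x)
      = Phi j (D.obj ⟨i⟩) s.pt (s.ι.app ⟨i⟩) x := by
  set eσ := Equiv.ofBijective _ (sigmaBijective_of_isColimit D c hc) with heσ
  have h1 := congr_fun ((Equiv.ofBijective _ (hPhi c.pt s.pt)).apply_symm_apply
    (fun z => Phi j (D.obj ⟨(eσ.symm z).1⟩) s.pt (s.ι.app ⟨(eσ.symm z).1⟩) (eσ.symm z).2))
    (c.ι.app ⟨i⟩ x)
  have h2 : eσ.symm (c.ι.app ⟨i⟩ x) = ⟨i, x⟩ := eσ.symm_apply_apply ⟨i, x⟩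
  refine h1.trans ?_
  show Phi j (D.obj ⟨(eσ.symm (c.ι.app ⟨i⟩ x)).1⟩) s.pt
    (s.ι.app ⟨(eσ.symm (c.ι.app ⟨i⟩ x)).1⟩) (eσ.symm (c.ι.app ⟨i⟩ x)).2 = _
  rw [h2]

include hPhi in
lemma preserves_of_phi_bijective :
    PreservesFiniteCoproducts j := by
  constructor
  intro J
  constructor
  intro D
  constructor
  intro c hc
  constructor
  refine ⟨fun s => descAux j hPhi hc s, fun s => ?_, fun s m hm => ?_⟩
  · rintro ⟨i⟩
    apply (hPhi (D.obj ⟨i⟩) s.pt).1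
    funext x
    have h0 : Phi j (D.obj ⟨i⟩) s.pt (j.map (c.ι.app ⟨i⟩) ≫ descAux j hPhi hc s) x
        = Phi j c.pt s.pt (descAux j hPhi hc s) (c.ι.app ⟨i⟩ x) := Phi_comp j _ _ _ _
    exact h0.trans (descAux_spec j hPhi hc s i x)
  · apply (hPhi c.pt s.pt).1
    funext z
    obtain ⟨⟨i, x⟩, rfl⟩ := (sigmaBijective_of_isColimit D c hc).2 z
    have h0 : Phi j c.pt s.pt m (sigmaMap D c ⟨i, x⟩)
        = Phi j (D.obj ⟨i⟩) s.pt (j.map (c.ι.app ⟨i⟩) ≫ m) x := (Phi_comp j _ _ _ _).symm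
    refine h0.trans ?_
    have hm' : j.map (c.ι.app ⟨i⟩) ≫ m = s.ι.app ⟨i⟩ := hm ⟨i⟩
    rw [hm']
    exact (descAux_spec j hPhi hc s i x).symm

end CP

end LawvereAux

namespace LawvereAux
open Opposite

section TypeFan
variable {J : Type} (G : Discrete J ⥤ Type) (c : Cone G)

def fanCmp : c.pt → ∀ i : J, G.obj ⟨i⟩ := fun p i => c.π.app ⟨i⟩ p

noncomputable def isLimitOfFanCmpBijective (h : Function.Bijective (fanCmp G c)) :
    IsLimit c := by
  let e := Equiv.ofBijective _ h
  refine ⟨fun s => TypeCat.ofHom (fun p => e.symm (fun i => s.π.app ⟨i⟩ p)), fun s => ?_, fun s m hm => ?_⟩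
  · rintro ⟨i⟩
    apply ConcreteCategory.hom_ext; intro p
    show fanCmp G c (e.symm (fun i => s.π.app ⟨i⟩ p)) i = s.π.app ⟨i⟩ p
    rw [show fanCmp G c (e.symm _) = e (e.symm _) from rfl, Equiv.apply_symm_apply]
  · apply ConcreteCategory.hom_ext; intro p
    show m p = e.symm (fun i => s.π.app ⟨i⟩ p)
    apply e.injective
    rw [Equiv.apply_symm_apply]
    funext i
    exact ConcreteCategory.congr_hom (hm ⟨i⟩) p

lemma fanCmpBijective_of_isLimit (hc : IsLimit c) :
    Function.Bijective (fanCmp G c) := by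
  constructor
  · intro p p' hpp
    apply (Types.isLimitEquivSections hc).injective
    ext k
    obtain ⟨i⟩ := k
    rw [Types.isLimitEquivSections_apply, Types.isLimitEquivSections_apply]
    exact congr_fun hpp i
  · intro q
    let s : Cone G := ⟨PUnit.{1}, Discrete.natTrans (fun i => TypeCat.ofHom (fun _ => q i.as))⟩
    exact ⟨hc.lift s PUnit.unit, funext fun i => ConcreteCategory.congr_hom (hc.fac s ⟨i⟩) PUnit.unit⟩

end TypeFan

section OPL
variable {Θ : Type} [SmallCategory Θ]

/-- transfer a discrete colimit in `Θ` to a limit in `Θᵒᵖ`, with `eqToHom` adjustments -/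
noncomputable def opLimitOfColimit {J : Type} {D : Discrete J ⥤ Θ} {c : Cocone D}
    (hc : IsColimit c) (K : Discrete J ⥤ Θᵒᵖ) (e : ∀ i : J, D.obj ⟨i⟩ = (K.obj ⟨i⟩).unop) :
    IsLimit (Cone.mk (op c.pt)
      (Discrete.natTrans (F := (Functor.const _).obj (op c.pt)) (G := K)
        (fun i => (eqToHom (e i.as).symm ≫ c.ι.app ⟨i.as⟩).op))) := by
  refine ⟨fun s => (hc.desc ⟨s.pt.unop,
      Discrete.natTrans (fun i => eqToHom (e i.as) ≫ (s.π.app ⟨i.as⟩).unop)⟩).op,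
    fun s => ?_, fun s m hm => ?_⟩
  · rintro ⟨i⟩
    have h1 := hc.fac ⟨s.pt.unop,
      Discrete.natTrans (fun i => eqToHom (e i.as) ≫ (s.π.app ⟨i.as⟩).unop)⟩ ⟨i⟩
    simp only [Discrete.natTrans_app] at h1
    apply Quiver.Hom.unop_inj
    simp only [Discrete.natTrans_app, unop_comp, Quiver.Hom.unop_op, Category.assoc, h1,
      eqToHom_trans_assoc, eqToHom_refl, Category.id_comp]
  · have h2 : ∀ i : J, c.ι.app ⟨i⟩ ≫ m.unop = eqToHom (e i) ≫ (s.π.app ⟨i⟩).unop := by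
      intro i
      have h3 := congr_arg Quiver.Hom.unop (hm ⟨i⟩)
      simp only [Discrete.natTrans_app, unop_comp, Quiver.Hom.unop_op, Category.assoc] at h3
      rw [← h3]
      simp [eqToHom_trans_assoc]
    have h4 := hc.uniq ⟨s.pt.unop,
      Discrete.natTrans (fun i => eqToHom (e i.as) ≫ (s.π.app ⟨i.as⟩).unop)⟩ m.unop
      (by rintro ⟨i⟩; simpa using h2 i)
    have h5 : m = (m.unop).op := rfl
    rw [h5, h4]

end OPL

end LawvereAux

namespace LawvereAux
open Opposite

variable {Θ : Type} [SmallCategory Θ] (j : A ⥤ Θ)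

/-- From `Good (j.op ⋙ P)`, products over any finite cofan in `A`. -/
lemma gp (P : Θᵒᵖ ⥤ Type) (hQ : Good (j.op ⋙ P)) {J : Type} [Fintype J]
    {D : Discrete J ⥤ A} {mc : Cocone D} (hmc : IsColimit mc) :
    Function.Bijective (fun (p : P.obj (op (j.obj mc.pt))) (i : J) =>
      P.map ((j.map (mc.ι.app ⟨i⟩)).op) p) := by
  set Q := j.op ⋙ P with hQdef
  have hσ := sigmaBijective_of_isColimit D mc hmc
  have key : ∀ (p : Q.obj (op mc.pt)) (i : J) (y : ULift (Fin ((D.obj ⟨i⟩).len))),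
      ev ((eta Q).app (op (D.obj ⟨i⟩)) (Q.map ((mc.ι.app ⟨i⟩).op) p)) y
        = ev ((eta Q).app (op mc.pt) p) (mc.ι.app ⟨i⟩ y) := by
    intro p i y
    show Q.map (pick y).op (Q.map ((mc.ι.app ⟨i⟩).op) p)
      = Q.map (pick (mc.ι.app ⟨i⟩ y)).op p
    rw [← FunctorToTypes.map_comp_apply, ← op_comp, pick_comp]
  constructor
  · intro p p' h
    apply (hQ mc.pt).1
    apply homext; intro z
    obtain ⟨⟨i, y⟩, rfl⟩ := hσ.2 z
    show ev ((eta Q).app (op mc.pt) p) (mc.ι.app ⟨i⟩ y) = ev ((eta Q).app (op mc.pt) p') (mc.ι.app ⟨i⟩ y)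
    rw [← key p i y, ← key p' i y]
    exact congrArg (fun t => ev ((eta Q).app (op (D.obj ⟨i⟩)) t) y)
      (congr_fun h i)
  · intro w
    let eσ := Equiv.ofBijective _ hσ
    let q : ULift (Fin (mc.pt.len)) → Q.obj (op one) :=
      fun z => ev ((eta Q).app (op (D.obj ⟨(eσ.symm z).1⟩)) (w (eσ.symm z).1)) (eσ.symm z).2
    obtain ⟨p, hp⟩ := (hQ mc.pt).2 (TypeCat.ofHom q)
    refine ⟨p, ?_⟩
    funext i
    apply (hQ (D.obj ⟨i⟩)).1
    apply homext; intro y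
    show ev ((eta Q).app (op (D.obj ⟨i⟩)) (Q.map ((mc.ι.app ⟨i⟩).op) p)) y
      = ev ((eta Q).app (op (D.obj ⟨i⟩)) (w i)) y
    rw [key p i y, hp]
    show q (eσ ⟨i, y⟩) = _
    have h3 : eσ.symm (eσ ⟨i, y⟩) = ⟨i, y⟩ := eσ.symm_apply_apply ⟨i, y⟩
    show ev ((eta Q).app (op (D.obj ⟨(eσ.symm (eσ ⟨i, y⟩)).1⟩)) (w (eσ.symm (eσ ⟨i, y⟩)).1))
      (eσ.symm (eσ ⟨i, y⟩)).2 = _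
    rw [h3]

end LawvereAux

namespace LawvereAux
open Opposite

variable {Θ : Type} [SmallCategory Θ] (j : A ⥤ Θ)

lemma part1_forward (hbij : Function.Bijective j.obj)
    (H : ∀ P : Aᵒᵖ ⥤ Type, nu.essImage P →
      nu.essImage (((j.op.lanAdjunction (Type 0)).toMonad).obj P)) :
    PreservesFiniteCoproducts j := by
  apply preserves_of_phi_bijective
  intro b θ
  obtain ⟨a, rfl⟩ := hbij.2 θ
  have mem1 : nu.essImage (yoneda.obj a) := (good_iff_essImage _).2 (good_yoneda a)
  have mem2 := H _ mem1
  have iso : ((j.op.lanAdjunction (Type 0)).toMonad).obj (yoneda.obj a)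
      ≅ j.op ⋙ yoneda.obj (j.obj a) :=
    Functor.isoWhiskerLeft j.op (j.op.lan.mapIso (uliftYonedaIsoYoneda.{0}.app a).symm ≪≫
      ((Presheaf.compULiftYonedaIsoULiftYonedaCompLan.{0} j).app a).symm ≪≫
        uliftYonedaIsoYoneda.{0}.app (j.obj a))
  have good3 : Good (j.op ⋙ yoneda.obj (j.obj a)) :=
    (good_iff_essImage _).1 (Functor.essImage.ofIso iso mem2)
  exact TypeCat.homEquiv.bijective.comp (good3 b)

lemma part2_of_products (hco : PreservesFiniteCoproducts j) (P : Θᵒᵖ ⥤ Type)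
    [PreservesFiniteProducts P] : Good (j.op ⋙ P) := by
  intro b
  have : PreservesColimitsOfShape (Discrete (ULift (Fin b.len))) j := inferInstance
  have hpick : IsColimit (j.mapCocone (cofanPick b)) :=
    isColimitOfPreserves j (cofanPickIsColimit b)
  have hK := opLimitOfColimit hpick
    (Discrete.functor (fun _ : ULift (Fin b.len) => op (j.obj one))) (fun _ => rfl)
  have : PreservesLimitsOfShape (Discrete (ULift (Fin b.len))) P :=
    inferInstance
  have hbij := fanCmpBijective_of_isLimit _ _ (isLimitOfPreserves P hK)
  have hbij2 := (TypeCat.homEquiv (X := ULift (Fin b.len))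
    (Y := P.obj (op (j.obj one)))).symm.bijective.comp hbij
  convert hbij2 using 1
  · rfl
  · rfl
  apply heq_of_eq
  funext p
  apply homext; intro x
  show P.map (j.map (pick x)).op p = P.map ((eqToHom rfl ≫ (j.mapCocone (cofanPick b)).ι.app ⟨x⟩).op) p
  rw [eqToHom_refl, Category.id_comp]
  rfl

end LawvereAux

namespace LawvereAux
open Opposite

variable {Θ : Type} [SmallCategory Θ] (j : A ⥤ Θ)

lemma part2_to_products (hbij : Function.Bijective j.obj) (hco : PreservesFiniteCoproducts j)
    (P : Θᵒᵖ ⥤ Type) (hQ : Good (j.op ⋙ P)) : PreservesFiniteProducts P := by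
  constructor
  intro n
  let J := Fin n
  constructor
  intro K
  constructor
  intro c hc
  constructor
  have := hco.preserves n
  let ej := Equiv.ofBijective j.obj hbij
  let a : J → A := fun i => ej.symm ((K.obj ⟨i⟩).unop)
  have e : ∀ i : J, j.obj (a i) = (K.obj ⟨i⟩).unop := fun i => ej.apply_symm_apply _
  have hm := cofanAIsColimit a
  have hjm : IsColimit (j.mapCocone (cofanA a)) := isColimitOfPreserves j hm
  have hc2 := opLimitOfColimit hjm K e
  let φ := hc2.conePointUniqueUpToIso hc
  have hφ : ∀ i : J, c.π.app ⟨i⟩ = φ.inv ≫ (eqToHom (e i).symm ≫ j.map ((cofanA a).ι.app ⟨i⟩)).op := by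
    intro i
    have h1 : φ.hom ≫ c.π.app ⟨i⟩
        = (eqToHom (e i).symm ≫ j.map ((cofanA a).ι.app ⟨i⟩)).op :=
      IsLimit.conePointUniqueUpToIso_hom_comp hc2 hc ⟨i⟩
    rw [← h1, Iso.inv_hom_id_assoc]
  apply isLimitOfFanCmpBijective
  have key : fanCmp (K ⋙ P) (P.mapCone c)
      = (fun w i => P.map ((eqToHom (e i).symm).op) (w i))
        ∘ (fun p i => P.map ((j.map ((cofanA a).ι.app ⟨i⟩)).op) p)
        ∘ (P.map φ.inv) := by
    funext p
    funext i
    show P.map (c.π.app ⟨i⟩) p = _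
    rw [hφ i]
    simp only [op_comp, Function.comp_apply]
    rw [FunctorToTypes.map_comp_apply, FunctorToTypes.map_comp_apply]
  rw [key]
  have b1 : Function.Bijective (P.map φ.inv) := by
    rw [← isIso_iff_bijective]
    infer_instance
  have b2 := gp j P hQ hm
  have b3 : Function.Bijective
      (fun (w : ∀ i : J, P.obj (op (j.obj (a i)))) i => P.map ((eqToHom (e i).symm).op) (w i)) := by
    have bc : ∀ i : J, Function.Bijective (P.map ((eqToHom (e i).symm).op)) := by
      intro i
      rw [← isIso_iff_bijective]
      infer_instance
    exact (Equiv.piCongrRight (fun i => Equiv.ofBijective _ (bc i))).bijective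
  exact b3.comp (b2.comp b1)

end LawvereAux

namespace LawvereAux
open Opposite

section FC
variable {X : Type} (D : Finset X ⥤ (Aᵒᵖ ⥤ Type)) (c : Cocone D)

lemma good_of_filtered_colimit (hc : IsColimit c) (hD : ∀ S, Good (D.obj S)) : Good c.pt := by
  classical
  have hev : ∀ k : Aᵒᵖ, IsColimit (((evaluation Aᵒᵖ Type).obj k).mapCocone c) :=
    fun k => isColimitOfPreserves _ hc
  -- push lemma
  have push : ∀ {S T : Finset X} (h : S ≤ T) (k : Aᵒᵖ) (p : (D.obj S).obj k),
      (c.ι.app T).app k ((D.map (homOfLE h)).app k p) = (c.ι.app S).app k p := by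
    intro S T h k p
    have := c.w (homOfLE h)
    rw [← this]
    rfl
  -- eta compatibility with any natural transformation into c.pt or between stages
  have etac : ∀ {Q : Aᵒᵖ ⥤ Type} (α : Q ⟶ c.pt) (b : A) (p : Q.obj (op b))
      (x : ULift (Fin b.len)),
      ev ((eta c.pt).app (op b) (α.app (op b) p)) x = α.app (op one) (ev ((eta Q).app (op b) p) x) := by
    intro Q α b p x
    exact (ConcreteCategory.congr_hom (ConcreteCategory.congr_hom (NatTrans.congr_app (eta_natural α) (op b)) p) x).symm
  have etat : ∀ {S T : Finset X} (h : S ≤ T) (b : A) (p : (D.obj S).obj (op b))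
      (x : ULift (Fin b.len)),
      ev ((eta (D.obj T)).app (op b) ((D.map (homOfLE h)).app (op b) p)) x
        = (D.map (homOfLE h)).app (op one) (ev ((eta (D.obj S)).app (op b) p) x) := by
    intro S T h b p x
    exact (ConcreteCategory.congr_hom (ConcreteCategory.congr_hom (NatTrans.congr_app (eta_natural (D.map (homOfLE h))) (op b)) p) x).symm
  intro b
  constructor
  · -- injectivity
    intro r r' hrr
    obtain ⟨S, p, hp⟩ := Types.jointly_surjective _ (hev (op b)) r
    obtain ⟨S', p', hp'⟩ := Types.jointly_surjective _ (hev (op b)) r'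
    subst hp hp'
    set T0 := S ⊔ S' with hT0
    set p0 := (D.map (homOfLE (le_sup_left : S ≤ T0))).app (op b) p with hp0
    set p0' := (D.map (homOfLE (le_sup_right : S' ≤ T0))).app (op b) p' with hp0'
    rw [show (((evaluation Aᵒᵖ Type).obj (op b)).mapCocone c).ι.app S p
        = (c.ι.app T0).app (op b) p0 from (push le_sup_left (op b) p).symm]
    rw [show (((evaluation Aᵒᵖ Type).obj (op b)).mapCocone c).ι.app S' p'
        = (c.ι.app T0).app (op b) p0' from (push le_sup_right (op b) p').symm]
    have hx : ∀ x : ULift (Fin b.len), ∃ k : Finset X, ∃ hk : T0 ≤ k,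
        (D.map (homOfLE hk)).app (op one) (ev ((eta (D.obj T0)).app (op b) p0) x)
          = (D.map (homOfLE hk)).app (op one) (ev ((eta (D.obj T0)).app (op b) p0') x) := by
      intro x
      have h1 : (c.ι.app T0).app (op one) (ev ((eta (D.obj T0)).app (op b) p0) x)
          = (c.ι.app T0).app (op one) (ev ((eta (D.obj T0)).app (op b) p0') x) := by
        rw [← etac (c.ι.app T0) b p0 x, ← etac (c.ι.app T0) b p0' x]
        have e1 : (eta c.pt).app (op b) ((c.ι.app T0).app (op b) p0)
            = (eta c.pt).app (op b) ((c.ι.app T0).app (op b) p0') := by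
          rw [push le_sup_left (op b) p, push le_sup_right (op b) p']
          exact hrr
        exact congrArg (fun t => ev t x) e1
      have h2 := (Types.FilteredColimit.isColimit_eq_iff
        (D ⋙ (evaluation Aᵒᵖ Type).obj (op one)) (hev (op one))).1 h1
      obtain ⟨k, f, g, hfg⟩ := h2
      refine ⟨k, leOfHom f, ?_⟩
      have hf : f = homOfLE (leOfHom f) := Subsingleton.elim _ _
      have hg : g = homOfLE (leOfHom f) := Subsingleton.elim _ _
      rw [hf] at hfg
      rw [hg] at hfg
      exact hfg
    choose kk hkk heq using hx
    set T := T0 ⊔ Finset.sup Finset.univ kk with hT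
    have hT0T : T0 ≤ T := le_sup_left
    have hkT : ∀ x, kk x ≤ T :=
      fun x => le_trans (Finset.le_sup (Finset.mem_univ x)) le_sup_right
    have key : ∀ x, (D.map (homOfLE hT0T)).app (op one) (ev ((eta (D.obj T0)).app (op b) p0) x)
        = (D.map (homOfLE hT0T)).app (op one) (ev ((eta (D.obj T0)).app (op b) p0') x) := by
      intro x
      have hcomp : (homOfLE hT0T : T0 ⟶ T) = homOfLE (hkk x) ≫ homOfLE (hkT x) :=
        Subsingleton.elim _ _
      rw [hcomp, D.map_comp]
      show (D.map (homOfLE (hkT x))).app (op one) ((D.map (homOfLE (hkk x))).app (op one) _)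
        = (D.map (homOfLE (hkT x))).app (op one) ((D.map (homOfLE (hkk x))).app (op one) _)
      rw [heq x]
    have hinj := (hD T b).1
    have e2 : (D.map (homOfLE hT0T)).app (op b) p0 = (D.map (homOfLE hT0T)).app (op b) p0' := by
      apply hinj
      apply homext; intro x
      rw [etat hT0T b p0 x, etat hT0T b p0' x]
      exact key x
    rw [← push hT0T (op b) p0, ← push hT0T (op b) p0', e2]
  · -- surjectivity
    intro q
    have hx : ∀ x : ULift (Fin b.len), ∃ S : Finset X, ∃ w : (D.obj S).obj (op one),
        (c.ι.app S).app (op one) w = ev q x := by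
      intro x
      obtain ⟨S, w, hw⟩ := Types.jointly_surjective _ (hev (op one)) (ev q x)
      exact ⟨S, w, hw⟩
    choose SS ww hww using hx
    set T := Finset.sup Finset.univ SS with hT
    have hST : ∀ x, SS x ≤ T := fun x => Finset.le_sup (Finset.mem_univ x)
    obtain ⟨p, hp⟩ := (hD T b).2
      (TypeCat.ofHom (fun (x : ULift (Fin b.len)) => (D.map (homOfLE (hST x))).app (op one) (ww x)))
    refine ⟨(c.ι.app T).app (op b) p, ?_⟩
    apply homext; intro x
    rw [etac (c.ι.app T) b p x]
    rw [congrArg (fun t => ev t x) hp]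
    show (c.ι.app T).app (op one) ((D.map (homOfLE (hST x))).app (op one) (ww x)) = ev q x
    rw [push (hST x) (op one) (ww x)]
    exact hww x

end FC

end LawvereAux

namespace LawvereAux
open Opposite

section SubDiagram
variable (X : Type)

/-- the functor of finite subsets of `X` -/
def subFunctor : Finset X ⥤ Type where
  obj S := {x // x ∈ S}
  map {S T} f := TypeCat.ofHom (fun y => ⟨y.1, f.le (y.2)⟩)

/-- the colimit cocone presenting `ν X` as a filtered colimit -/
noncomputable def subCocone : Cocone (subFunctor X ⋙ nu) where
  pt := nu.obj X
  ι := { app := fun S => nu.map (TypeCat.ofHom (Subtype.val : {x // x ∈ S} → X))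
         naturality := fun S T f => by
           show nu.map ((subFunctor X).map f) ≫ nu.map _ = _ ≫ 𝟙 _
           rw [Category.comp_id, ← nu.map_comp]
           rfl }

noncomputable def subCoconeIsColimit : IsColimit (subCocone X) := by
  classical
  apply evaluationJointlyReflectsColimits
  rintro ⟨b⟩
  letI : Fintype (unop (finInclusion.op.obj (op b))) := inferInstanceAs (Fintype (ULift (Fin b.len)))
  apply Types.FilteredColimit.isColimitOf
  · -- jointly surjective
    intro f
    let S : Finset X := Finset.image (fun u : ULift (Fin b.len) => ev f u) Finset.univ
    refine ⟨S, TypeCat.ofHom (fun u => ⟨ev f u, Finset.mem_image_of_mem _ (Finset.mem_univ u)⟩), ?_⟩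
    rfl
  · -- eventually equal
    intro S T g g' hgg
    refine ⟨S ⊔ T, homOfLE le_sup_left, homOfLE le_sup_right, ?_⟩
    apply homext; intro u
    apply Subtype.ext
    exact ConcreteCategory.congr_hom hgg u

end SubDiagram

end LawvereAux

namespace LawvereAux
open Opposite

/-- `ν` of a finite type is representable -/
noncomputable def nuFinIso (Y : Type) [Fintype Y] :
    nu.obj Y ≅ yoneda.obj (FintypeCat.Skeleton.mk (Fintype.card Y)) := by
  have eY : Y ≃ ULift (Fin (Fintype.card Y)) := (Fintype.equivFin Y).trans Equiv.ulift.symm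
  refine NatIso.ofComponents (fun k => Equiv.toIso (TypeCat.homEquiv.trans (Equiv.arrowCongr (Equiv.refl _) eY))) ?_
  intro k k' f
  apply ConcreteCategory.hom_ext; intro p
  rfl

variable {Θ : Type} [SmallCategory Θ] (j : A ⥤ Θ)

lemma good_R (hco : PreservesFiniteCoproducts j) (θ : Θ) : Good (j.op ⋙ yoneda.obj θ) := by
  intro b
  exact TypeCat.homEquiv.symm.bijective.comp (phi_bijective_of_preserves j b θ)

lemma part1_backward (hco : PreservesFiniteCoproducts j) (P : Aᵒᵖ ⥤ Type)
    (hP : nu.essImage P) :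
    nu.essImage (((j.op.lanAdjunction (Type 0)).toMonad).obj P) := by
  obtain ⟨X, ⟨eiso⟩⟩ := hP
  let F0 : (Aᵒᵖ ⥤ Type) ⥤ (Aᵒᵖ ⥤ Type) :=
    j.op.lan ⋙ (Functor.whiskeringLeft Aᵒᵖ Θᵒᵖ (Type 0)).obj j.op
  haveI h1 : PreservesColimits (j.op.lan (H := Type 0)) :=
    (j.op.lanAdjunction (Type 0)).leftAdjoint_preservesColimits
  have hTC : IsColimit (F0.mapCocone (subCocone X)) :=
    isColimitOfPreserves F0 (subCoconeIsColimit X)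
  have hgood : Good (F0.obj (nu.obj X)) := by
    apply good_of_filtered_colimit ((subFunctor X ⋙ nu) ⋙ F0) (F0.mapCocone (subCocone X)) hTC
    intro S
    have iso1 : F0.obj (nu.obj {x // x ∈ S})
        ≅ j.op ⋙ yoneda.obj (j.obj (FintypeCat.Skeleton.mk (Fintype.card {x // x ∈ S}))) :=
      F0.mapIso (nuFinIso _) ≪≫
        Functor.isoWhiskerLeft j.op (j.op.lan.mapIso (uliftYonedaIsoYoneda.{0}.app _).symm ≪≫
          ((Presheaf.compULiftYonedaIsoULiftYonedaCompLan.{0} j).app _).symm ≪≫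
            uliftYonedaIsoYoneda.{0}.app (j.obj _))
    exact good_of_iso iso1.symm (good_R j hco _)
  exact (good_iff_essImage _).2 (good_of_iso (F0.mapIso eiso) hgood)

end LawvereAux

open LawvereAux in
/-- for `E = Set` with dense generator `A` a skeleton of finite sets,
a bijective-on-objects functor `j : A ⥤ Θ` is a theory with arities `A` (the monad
`j^* j_!` preserves flat presheaves, i.e. the essential image of the nerve) iff
`j` preserves finite coproducts (iff `Θᵒᵖ` is a Lawvere algebraic theory); and in
that case the `Θ`-models (presheaves on `Θ` restricting to flat presheaves on `A`)
are exactly the finite-product-preserving functors `Θᵒᵖ ⥤ Set`, i.e. the models of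
the Lawvere theory `Θᵒᵖ`. -/
theorem lawvere_theories {Θ : Type} [SmallCategory Θ]
    (j : FintypeCat.Skeleton.{0} ⥤ Θ) (hbij : Function.Bijective j.obj) :
    ((∀ P : FintypeCat.Skeleton.{0}ᵒᵖ ⥤ Type,
        (Presheaf.restrictedYoneda finInclusion).essImage P →
        (Presheaf.restrictedYoneda finInclusion).essImage
          (((j.op.lanAdjunction (Type 0)).toMonad).obj P)) ↔
      Nonempty (PreservesFiniteCoproducts j)) ∧
    (Nonempty (PreservesFiniteCoproducts j) →
      ∀ P : Θᵒᵖ ⥤ Type,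
      ((Presheaf.restrictedYoneda finInclusion).essImage
          (((Functor.whiskeringLeft _ _ (Type 0)).obj j.op).obj P) ↔
        Nonempty (PreservesFiniteProducts P))) := by
  constructor
  · constructor
    · intro H
      exact ⟨part1_forward j hbij H⟩
    · rintro ⟨hco⟩ P hP
      exact part1_backward j hco P hP
  · rintro ⟨hco⟩ P
    constructor
    · intro hmem
      exact ⟨part2_to_products j hbij hco P ((good_iff_essImage _).1 hmem)⟩
    · rintro ⟨hPP⟩
      exact (good_iff_essImage _).2 (part2_of_products j hco P)
end
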